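/- Consider the degrees-of-freedom estimator σ̂²_HO = (1/(n−k)) Σ_i (y_i − x_i'β̂)² and the estimator θ̂_HO = β̂'Aβ̂ − Σ_i B_ii σ̂²_HO. Its bias is E[θ̂_HO] − θ = σ_{nB,σ²} + S_B · (n/(n−k)) · σ_{P,σ²}, where σ_{nB,σ²} = Σ_i B_ii (σ_i² − σ̄²), σ̄² = (1/n) Σ_i σ_i², S_B = Σ_i B_ii, and σ_{P,σ²} = (1/n) Σ_i P_ii (σ_i² − σ̄²). In particular θ̂_HO is unbiased under homoscedasticity (σ_i² constant) or balanced design (B_ii, P_ii constant in i). -/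

import Mathlib

open Matrix BigOperators Finset MeasureTheory ProbabilityTheory

lemma dot_sum' {k : ℕ} {ι : Type*} (s : Finset ι) (v : Fin k → ℝ) (w : ι → Fin k → ℝ) :
    v ⬝ᵥ (∑ i ∈ s, w i) = ∑ i ∈ s, v ⬝ᵥ w i := by
  simp only [dotProduct, Finset.sum_apply, Finset.mul_sum]
  exact Finset.sum_comm

lemma sum_dot' {k : ℕ} {ι : Type*} (s : Finset ι) (v : Fin k → ℝ) (w : ι → Fin k → ℝ) :
    (∑ i ∈ s, w i) ⬝ᵥ v = ∑ i ∈ s, w i ⬝ᵥ v := by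
  simp only [dotProduct, Finset.sum_apply, Finset.sum_mul]
  exact Finset.sum_comm

lemma mulVec_sum' {k m : ℕ} {ι : Type*} (s : Finset ι) (M : Matrix (Fin m) (Fin k) ℝ)
    (w : ι → Fin k → ℝ) : M.mulVec (∑ i ∈ s, w i) = ∑ i ∈ s, M.mulVec (w i) := by
  ext a
  simp only [Matrix.mulVec, Finset.sum_apply]
  exact dot_sum' s (M a) w

lemma integral_quad {Ω : Type*} [MeasurableSpace Ω] (μ : Measure Ω) [IsProbabilityMeasure μ]
    {n : ℕ} (ε : Fin n → Ω → ℝ) (σ : Fin n → ℝ)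
    (hindep : iIndepFun ε μ)
    (hL2 : ∀ i, MemLp (ε i) 2 μ)
    (hmean : ∀ i, ∫ ω, ε i ω ∂μ = 0)
    (hvar : ∀ i, ∫ ω, (ε i ω) ^ 2 ∂μ = (σ i) ^ 2)
    (c : ℝ) (l : Fin n → ℝ) (q : Fin n → Fin n → ℝ) (f : Ω → ℝ)
    (hf : ∀ ω, f ω = c + (∑ j, l j * ε j ω) + ∑ a, ∑ b, q a b * (ε a ω * ε b ω)) :
    ∫ ω, f ω ∂μ = c + ∑ a, q a a * (σ a) ^ 2 := by
  have hint : ∀ i, Integrable (ε i) μ := fun i => (hL2 i).integrable one_le_two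
  have hmul : ∀ a b, Integrable (fun ω => ε a ω * ε b ω) μ := by
    intro a b
    rcases eq_or_ne a b with rfl | hab
    · simpa [pow_two] using (hL2 a).integrable_sq
    · exact (hindep.indepFun hab).integrable_mul (hint a) (hint b)
  have hε2 : ∀ a b, ∫ ω, ε a ω * ε b ω ∂μ = if a = b then (σ a) ^ 2 else 0 := by
    intro a b
    rcases eq_or_ne a b with rfl | hab
    · simpa [pow_two] using hvar a
    · have h := (hindep.indepFun hab).integral_mul_eq_mul_integral (hint a).1 (hint b).1
      rw [if_neg hab]
      calc ∫ ω, ε a ω * ε b ω ∂μ = ∫ ω, (ε a * ε b) ω ∂μ := rfl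
        _ = (∫ ω, ε a ω ∂μ) * ∫ ω, ε b ω ∂μ := h
        _ = 0 := by rw [hmean a, zero_mul]
  have h1 : Integrable (fun ω => ∑ j, l j * ε j ω) μ :=
    integrable_finset_sum _ fun j _ => (hint j).const_mul _
  have h2 : Integrable (fun ω => ∑ a, ∑ b, q a b * (ε a ω * ε b ω)) μ :=
    integrable_finset_sum _ fun a _ =>
      integrable_finset_sum _ fun b _ => (hmul a b).const_mul _
  calc ∫ ω, f ω ∂μ
      = ∫ ω, (c + (∑ j, l j * ε j ω) + ∑ a, ∑ b, q a b * (ε a ω * ε b ω)) ∂μ := by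
        exact integral_congr_ae (Filter.Eventually.of_forall hf)
    _ = (∫ ω, (c + ∑ j, l j * ε j ω) ∂μ) + ∫ ω, (∑ a, ∑ b, q a b * (ε a ω * ε b ω)) ∂μ := by
        exact integral_add ((integrable_const c).add h1) h2
    _ = c + ∑ a, q a a * (σ a) ^ 2 := by
        rw [integral_add (integrable_const c) h1, integral_const]
        simp only [measure_univ, ENNReal.toReal_one, smul_eq_mul, one_mul]
        rw [integral_finset_sum _ fun j _ => (hint j).const_mul _,
          integral_finset_sum _ fun a _ =>
            integrable_finset_sum _ fun b _ => (hmul a b).const_mul _]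
        have e1 : ∀ j : Fin n, ∫ ω, l j * ε j ω ∂μ = 0 := by
          intro j; rw [integral_const_mul, hmean j, mul_zero]
        have e2 : ∀ a : Fin n, ∫ ω, (∑ b, q a b * (ε a ω * ε b ω)) ∂μ = q a a * (σ a) ^ 2 := by
          intro a
          rw [integral_finset_sum _ fun b _ => (hmul a b).const_mul _]
          have : ∀ b : Fin n, ∫ ω, q a b * (ε a ω * ε b ω) ∂μ
              = q a b * if a = b then (σ a) ^ 2 else 0 := by
            intro b; rw [integral_const_mul, hε2]
          rw [Finset.sum_congr rfl fun b _ => this b]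
          simp
        rw [Finset.sum_congr rfl fun j _ => e1 j,
          Finset.sum_congr rfl fun a _ => e2 a]
        simp

/-- the bias of the homoscedasticity-only estimator
`θ̂_HO = β̂'Aβ̂ − Σ_i B_ii σ̂²_HO` is
`σ_{nB,σ²} + S_B (n/(n−k)) σ_{P,σ²}`; in particular `θ̂_HO` is unbiased under
homoscedasticity or under balanced design. -/
theorem homoscedasticity_only_estimator_bias {Ω : Type*} [MeasurableSpace Ω]
    (μ : Measure Ω) [IsProbabilityMeasure μ]
    {n k : ℕ} (hkn : k < n)
    (x : Fin n → Fin k → ℝ) (β : Fin k → ℝ)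
    (ε : Fin n → Ω → ℝ) (σ : Fin n → ℝ)
    (hmeas : ∀ i, Measurable (ε i))
    (hindep : iIndepFun ε μ)
    (hL2 : ∀ i, MemLp (ε i) 2 μ)
    (hmean : ∀ i, ∫ ω, ε i ω ∂μ = 0)
    (hvar : ∀ i, ∫ ω, (ε i ω) ^ 2 ∂μ = (σ i) ^ 2)
    (y : Fin n → Ω → ℝ) (hy : ∀ i ω, y i ω = x i ⬝ᵥ β + ε i ω)
    (A Sxx : Matrix (Fin k) (Fin k) ℝ)
    (hA : A.IsSymm)
    (hSxx : Sxx = ∑ i, vecMulVec (x i) (x i))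
    (hS : IsUnit Sxx.det)
    (βhat : Ω → Fin k → ℝ)
    (hβ : ∀ ω, βhat ω = Sxx⁻¹.mulVec (∑ j, y j ω • x j))
    (σHOsq : Ω → ℝ)
    (hσHO : ∀ ω, σHOsq ω = (1 / ((n : ℝ) - k)) * ∑ i, (y i ω - x i ⬝ᵥ βhat ω) ^ 2)
    (θHO : Ω → ℝ)
    (hθHO : ∀ ω, θHO ω = βhat ω ⬝ᵥ A.mulVec (βhat ω)
      - (∑ i, x i ⬝ᵥ (Sxx⁻¹ * A * Sxx⁻¹).mulVec (x i)) * σHOsq ω)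
    (B P : Fin n → ℝ)
    (hB : ∀ i, B i = x i ⬝ᵥ (Sxx⁻¹ * A * Sxx⁻¹).mulVec (x i))
    (hP : ∀ i, P i = x i ⬝ᵥ Sxx⁻¹.mulVec (x i))
    (sbar : ℝ) (hsbar : sbar = (1 / (n : ℝ)) * ∑ i, (σ i) ^ 2) :
    (∫ ω, θHO ω ∂μ - β ⬝ᵥ A.mulVec β
      = (∑ i, B i * ((σ i) ^ 2 - sbar))
        + (∑ i, B i) * ((n : ℝ) / ((n : ℝ) - k))
            * ((1 / (n : ℝ)) * ∑ i, P i * ((σ i) ^ 2 - sbar))) ∧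
    ((∀ i j, (σ i) ^ 2 = (σ j) ^ 2) → ∫ ω, θHO ω ∂μ = β ⬝ᵥ A.mulVec β) ∧
    ((∀ i j, B i = B j ∧ P i = P j) → ∫ ω, θHO ω ∂μ = β ⬝ᵥ A.mulVec β) := by
  -- numeric facts
  have hn0 : (0:ℝ) < (n:ℝ) := by
    have : 0 < n := Nat.lt_of_le_of_lt (Nat.zero_le k) hkn
    exact_mod_cast this
  have hnne : (n:ℝ) ≠ 0 := ne_of_gt hn0
  have hnk : ((n:ℝ) - k) ≠ 0 := by
    have : (k:ℝ) < (n:ℝ) := by exact_mod_cast hkn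
    exact ne_of_gt (by linarith)
  -- matrix facts
  have hSinv : Sxx⁻¹ * Sxx = 1 := nonsing_inv_mul _ hS
  have hSinv' : Sxx * Sxx⁻¹ = 1 := mul_nonsing_inv _ hS
  have hSsymm : Sxxᵀ = Sxx := by
    rw [hSxx, Matrix.transpose_sum]
    refine Finset.sum_congr rfl fun i _ => ?_
    ext a b
    simp [vecMulVec_apply, mul_comm]
  have hSisymm : Sxx⁻¹ᵀ = Sxx⁻¹ := by rw [Matrix.transpose_nonsing_inv, hSsymm]
  have hdot : ∀ (v w : Fin k → ℝ), Sxx⁻¹.mulVec v ⬝ᵥ w = v ⬝ᵥ Sxx⁻¹.mulVec w := by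
    intro v w
    rw [Matrix.dotProduct_mulVec, ← Matrix.mulVec_transpose, hSisymm, dotProduct_comm]
  have hSmulVec : ∀ z : Fin k → ℝ, Sxx.mulVec z = ∑ i, (x i ⬝ᵥ z) • x i := by
    intro z
    rw [hSxx]
    ext a
    simp only [Matrix.mulVec, Finset.sum_apply, Matrix.sum_apply, dotProduct, vecMulVec_apply,
      Pi.smul_apply, smul_eq_mul, Finset.sum_mul, Finset.mul_sum]
    rw [Finset.sum_comm]
    exact Finset.sum_congr rfl fun i _ => Finset.sum_congr rfl fun j _ => by ring
  have hIdem : ∀ v w : Fin k → ℝ,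
      ∑ i, (v ⬝ᵥ Sxx⁻¹.mulVec (x i)) * (x i ⬝ᵥ Sxx⁻¹.mulVec w) = v ⬝ᵥ Sxx⁻¹.mulVec w := by
    intro v w
    have step : ∀ i, (v ⬝ᵥ Sxx⁻¹.mulVec (x i)) * (x i ⬝ᵥ Sxx⁻¹.mulVec w)
        = Sxx⁻¹.mulVec v ⬝ᵥ ((x i ⬝ᵥ Sxx⁻¹.mulVec w) • x i) := by
      intro i
      rw [dotProduct_smul, hdot v (x i)]
      simp [mul_comm]
    rw [Finset.sum_congr rfl fun i _ => step i, ← dot_sum', ← hSmulVec,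
      Matrix.mulVec_mulVec, hSinv', Matrix.one_mulVec, hdot]
  have htrace : ∑ i, x i ⬝ᵥ Sxx⁻¹.mulVec (x i) = (k : ℝ) := by
    have htr : ∀ (v : Fin k → ℝ), (Sxx⁻¹ * vecMulVec v v).trace = v ⬝ᵥ Sxx⁻¹.mulVec v := by
      intro v
      simp only [Matrix.trace, Matrix.diag, Matrix.mul_apply, vecMulVec_apply, dotProduct,
        Matrix.mulVec, Finset.mul_sum]
      exact Finset.sum_congr rfl fun i _ => Finset.sum_congr rfl fun j _ => by ring
    have h1 : (Sxx⁻¹ * Sxx).trace = ∑ i, x i ⬝ᵥ Sxx⁻¹.mulVec (x i) := by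
      calc (Sxx⁻¹ * Sxx).trace = (∑ i, Sxx⁻¹ * vecMulVec (x i) (x i)).trace := by
            rw [← Finset.mul_sum, ← hSxx]
        _ = ∑ i, x i ⬝ᵥ Sxx⁻¹.mulVec (x i) := by
            rw [Matrix.trace_sum]
            exact Finset.sum_congr rfl fun i _ => htr (x i)
    rw [← h1, hSinv, Matrix.trace_one]
    simp
  have hPsym : ∀ a b : Fin n, x a ⬝ᵥ Sxx⁻¹.mulVec (x b) = x b ⬝ᵥ Sxx⁻¹.mulVec (x a) := by
    intro a b
    rw [← hdot, dotProduct_comm]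
  -- βhat expansion
  have hβhat : ∀ ω, βhat ω = β + ∑ j, ε j ω • Sxx⁻¹.mulVec (x j) := by
    intro ω
    rw [hβ]
    have hys : (∑ j, y j ω • x j) = Sxx.mulVec β + ∑ j, ε j ω • x j := by
      rw [hSmulVec, ← Finset.sum_add_distrib]
      refine Finset.sum_congr rfl fun j _ => ?_
      rw [hy, add_smul]
    rw [hys, Matrix.mulVec_add, Matrix.mulVec_mulVec, hSinv, Matrix.one_mulVec, mulVec_sum']
    congr 1
    exact Finset.sum_congr rfl fun j _ => Matrix.mulVec_smul _ _ _
  have hcAc : ∀ a b : Fin n, Sxx⁻¹.mulVec (x a) ⬝ᵥ A.mulVec (Sxx⁻¹.mulVec (x b))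
      = x a ⬝ᵥ (Sxx⁻¹ * A * Sxx⁻¹).mulVec (x b) := by
    intro a b
    rw [Matrix.mulVec_mulVec, hdot, Matrix.mulVec_mulVec, ← Matrix.mul_assoc]
  -- quadratic form expansion
  have hquad : ∀ ω, βhat ω ⬝ᵥ A.mulVec (βhat ω)
      = β ⬝ᵥ A.mulVec β
        + (∑ j, (β ⬝ᵥ A.mulVec (Sxx⁻¹.mulVec (x j)) + Sxx⁻¹.mulVec (x j) ⬝ᵥ A.mulVec β) * ε j ω)
        + ∑ a, ∑ b, (x a ⬝ᵥ (Sxx⁻¹ * A * Sxx⁻¹).mulVec (x b)) * (ε a ω * ε b ω) := by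
    intro ω
    have hS1 : (∑ j, ε j ω • Sxx⁻¹.mulVec (x j)) ⬝ᵥ A.mulVec β
        = ∑ j, (Sxx⁻¹.mulVec (x j) ⬝ᵥ A.mulVec β) * ε j ω := by
      rw [sum_dot']
      refine Finset.sum_congr rfl fun j _ => ?_
      rw [smul_dotProduct]
      simp [mul_comm]
    have hS2 : β ⬝ᵥ A.mulVec (∑ j, ε j ω • Sxx⁻¹.mulVec (x j))
        = ∑ j, (β ⬝ᵥ A.mulVec (Sxx⁻¹.mulVec (x j))) * ε j ω := by
      rw [mulVec_sum', dot_sum']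
      refine Finset.sum_congr rfl fun j _ => ?_
      rw [Matrix.mulVec_smul, dotProduct_smul]
      simp [mul_comm]
    have hS3 : (∑ a, ε a ω • Sxx⁻¹.mulVec (x a)) ⬝ᵥ A.mulVec (∑ b, ε b ω • Sxx⁻¹.mulVec (x b))
        = ∑ a, ∑ b, (x a ⬝ᵥ (Sxx⁻¹ * A * Sxx⁻¹).mulVec (x b)) * (ε a ω * ε b ω) := by
      rw [sum_dot']
      refine Finset.sum_congr rfl fun a _ => ?_
      rw [smul_dotProduct, mulVec_sum', dot_sum', Finset.smul_sum]
      refine Finset.sum_congr rfl fun b _ => ?_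
      rw [Matrix.mulVec_smul, dotProduct_smul, hcAc a b]
      simp only [smul_eq_mul]
      ring
    have hcomb : ∑ j, (β ⬝ᵥ A.mulVec (Sxx⁻¹.mulVec (x j)) + Sxx⁻¹.mulVec (x j) ⬝ᵥ A.mulVec β) * ε j ω
        = (∑ j, (β ⬝ᵥ A.mulVec (Sxx⁻¹.mulVec (x j))) * ε j ω)
          + ∑ j, (Sxx⁻¹.mulVec (x j) ⬝ᵥ A.mulVec β) * ε j ω := by
      rw [← Finset.sum_add_distrib]
      exact Finset.sum_congr rfl fun j _ => by ring
    rw [hβhat, Matrix.mulVec_add, dotProduct_add, add_dotProduct,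
      add_dotProduct, hS1, hS2, hS3, hcomb]
    ring
  -- residual expansion
  have hres : ∀ ω (i : Fin n), y i ω - x i ⬝ᵥ βhat ω
      = ∑ j, ((if i = j then (1:ℝ) else 0) - x i ⬝ᵥ Sxx⁻¹.mulVec (x j)) * ε j ω := by
    intro ω i
    have h1 : x i ⬝ᵥ βhat ω = x i ⬝ᵥ β + ∑ j, (x i ⬝ᵥ Sxx⁻¹.mulVec (x j)) * ε j ω := by
      rw [hβhat, dotProduct_add, dot_sum']
      congr 1
      refine Finset.sum_congr rfl fun j _ => ?_
      rw [dotProduct_smul]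
      simp [mul_comm]
    have h2 : ε i ω = ∑ j, (if i = j then (1:ℝ) else 0) * ε j ω := by
      rw [Finset.sum_congr rfl fun j _ => ite_mul (i = j) (1:ℝ) 0 (ε j ω)]
      simp
    rw [hy, h1, Finset.sum_congr rfl fun j _ =>
      sub_mul (if i = j then (1:ℝ) else 0) (x i ⬝ᵥ Sxx⁻¹.mulVec (x j)) (ε j ω),
      Finset.sum_sub_distrib, ← h2]
    ring
  -- residual sum of squares as quadratic form
  have hressq : ∀ ω, (∑ i, (y i ω - x i ⬝ᵥ βhat ω) ^ 2)
      = ∑ a, ∑ b, (∑ i, ((if i = a then (1:ℝ) else 0) - x i ⬝ᵥ Sxx⁻¹.mulVec (x a))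
          * ((if i = b then (1:ℝ) else 0) - x i ⬝ᵥ Sxx⁻¹.mulVec (x b))) * (ε a ω * ε b ω) := by
    intro ω
    rw [Finset.sum_congr rfl fun i _ => by rw [hres ω i, sq, Finset.sum_mul_sum]]
    rw [Finset.sum_comm]
    refine Finset.sum_congr rfl fun a _ => ?_
    rw [Finset.sum_comm]
    refine Finset.sum_congr rfl fun b _ => ?_
    rw [Finset.sum_mul]
    exact Finset.sum_congr rfl fun i _ => by ring
  -- pointwise decomposition of θHO
  have hpt : ∀ ω, θHO ω = β ⬝ᵥ A.mulVec β
      + (∑ j, (β ⬝ᵥ A.mulVec (Sxx⁻¹.mulVec (x j)) + Sxx⁻¹.mulVec (x j) ⬝ᵥ A.mulVec β) * ε j ω)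
      + ∑ a, ∑ b, ((x a ⬝ᵥ (Sxx⁻¹ * A * Sxx⁻¹).mulVec (x b))
          - (∑ i, x i ⬝ᵥ (Sxx⁻¹ * A * Sxx⁻¹).mulVec (x i)) * (1 / ((n:ℝ) - k))
            * (∑ i, ((if i = a then (1:ℝ) else 0) - x i ⬝ᵥ Sxx⁻¹.mulVec (x a))
              * ((if i = b then (1:ℝ) else 0) - x i ⬝ᵥ Sxx⁻¹.mulVec (x b))))
          * (ε a ω * ε b ω) := by
    intro ω
    have hsub : (∑ i, x i ⬝ᵥ (Sxx⁻¹ * A * Sxx⁻¹).mulVec (x i)) * σHOsq ω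
        = ∑ a, ∑ b, ((∑ i, x i ⬝ᵥ (Sxx⁻¹ * A * Sxx⁻¹).mulVec (x i)) * (1 / ((n:ℝ) - k))
            * (∑ i, ((if i = a then (1:ℝ) else 0) - x i ⬝ᵥ Sxx⁻¹.mulVec (x a))
              * ((if i = b then (1:ℝ) else 0) - x i ⬝ᵥ Sxx⁻¹.mulVec (x b))))
          * (ε a ω * ε b ω) := by
      rw [hσHO, hressq, ← mul_assoc, Finset.mul_sum]
      refine Finset.sum_congr rfl fun a _ => ?_
      rw [Finset.mul_sum]
      exact Finset.sum_congr rfl fun b _ => by ring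
    have hexp : ∑ a, ∑ b, ((x a ⬝ᵥ (Sxx⁻¹ * A * Sxx⁻¹).mulVec (x b))
          - (∑ i, x i ⬝ᵥ (Sxx⁻¹ * A * Sxx⁻¹).mulVec (x i)) * (1 / ((n:ℝ) - k))
            * (∑ i, ((if i = a then (1:ℝ) else 0) - x i ⬝ᵥ Sxx⁻¹.mulVec (x a))
              * ((if i = b then (1:ℝ) else 0) - x i ⬝ᵥ Sxx⁻¹.mulVec (x b))))
          * (ε a ω * ε b ω)
        = (∑ a, ∑ b, (x a ⬝ᵥ (Sxx⁻¹ * A * Sxx⁻¹).mulVec (x b)) * (ε a ω * ε b ω))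
          - ∑ a, ∑ b, ((∑ i, x i ⬝ᵥ (Sxx⁻¹ * A * Sxx⁻¹).mulVec (x i)) * (1 / ((n:ℝ) - k))
              * (∑ i, ((if i = a then (1:ℝ) else 0) - x i ⬝ᵥ Sxx⁻¹.mulVec (x a))
                * ((if i = b then (1:ℝ) else 0) - x i ⬝ᵥ Sxx⁻¹.mulVec (x b))))
            * (ε a ω * ε b ω) := by
      rw [← Finset.sum_sub_distrib]
      refine Finset.sum_congr rfl fun a _ => ?_
      rw [← Finset.sum_sub_distrib]
      exact Finset.sum_congr rfl fun b _ => by ring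
    rw [hθHO, hquad, hsub, hexp]
    ring
  -- the expectation
  have hInt := integral_quad μ ε σ hindep hL2 hmean hvar (β ⬝ᵥ A.mulVec β)
    (fun j => β ⬝ᵥ A.mulVec (Sxx⁻¹.mulVec (x j)) + Sxx⁻¹.mulVec (x j) ⬝ᵥ A.mulVec β)
    (fun a b => (x a ⬝ᵥ (Sxx⁻¹ * A * Sxx⁻¹).mulVec (x b))
      - (∑ i, x i ⬝ᵥ (Sxx⁻¹ * A * Sxx⁻¹).mulVec (x i)) * (1 / ((n:ℝ) - k))
        * (∑ i, ((if i = a then (1:ℝ) else 0) - x i ⬝ᵥ Sxx⁻¹.mulVec (x a))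
          * ((if i = b then (1:ℝ) else 0) - x i ⬝ᵥ Sxx⁻¹.mulVec (x b))))
    θHO hpt
  -- diagonal of the residual quadratic form
  have hRaa : ∀ a : Fin n, (∑ i, ((if i = a then (1:ℝ) else 0) - x i ⬝ᵥ Sxx⁻¹.mulVec (x a))
      * ((if i = a then (1:ℝ) else 0) - x i ⬝ᵥ Sxx⁻¹.mulVec (x a)))
      = 1 - x a ⬝ᵥ Sxx⁻¹.mulVec (x a) := by
    intro a
    have hsq : ∑ i, (x i ⬝ᵥ Sxx⁻¹.mulVec (x a)) * (x i ⬝ᵥ Sxx⁻¹.mulVec (x a))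
        = x a ⬝ᵥ Sxx⁻¹.mulVec (x a) := by
      rw [Finset.sum_congr rfl fun i _ => by rw [show (x i ⬝ᵥ Sxx⁻¹.mulVec (x a))
        * (x i ⬝ᵥ Sxx⁻¹.mulVec (x a)) = (x a ⬝ᵥ Sxx⁻¹.mulVec (x i)) * (x i ⬝ᵥ Sxx⁻¹.mulVec (x a))
        from by rw [hPsym a i]]]
      exact hIdem (x a) (x a)
    have expand : ∀ i : Fin n, ((if i = a then (1:ℝ) else 0) - x i ⬝ᵥ Sxx⁻¹.mulVec (x a))
        * ((if i = a then (1:ℝ) else 0) - x i ⬝ᵥ Sxx⁻¹.mulVec (x a))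
        = (if i = a then 1 - 2 * (x i ⬝ᵥ Sxx⁻¹.mulVec (x a)) else 0)
          + (x i ⬝ᵥ Sxx⁻¹.mulVec (x a)) * (x i ⬝ᵥ Sxx⁻¹.mulVec (x a)) := by
      intro i
      by_cases h : i = a <;> simp [h] <;> ring
    rw [Finset.sum_congr rfl fun i _ => expand i, Finset.sum_add_distrib, hsq,
      Finset.sum_ite_eq' univ a (fun i => 1 - 2 * (x i ⬝ᵥ Sxx⁻¹.mulVec (x a)))]
    simp
    ring
  have main : ∫ ω, θHO ω ∂μ - β ⬝ᵥ A.mulVec β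
      = (∑ i, B i * ((σ i) ^ 2 - sbar))
        + (∑ i, B i) * ((n : ℝ) / ((n : ℝ) - k))
            * ((1 / (n : ℝ)) * ∑ i, P i * ((σ i) ^ 2 - sbar)) := by
    rw [hInt]
    have hgoal : ∀ a : Fin n, ((x a ⬝ᵥ (Sxx⁻¹ * A * Sxx⁻¹).mulVec (x a))
        - (∑ i, x i ⬝ᵥ (Sxx⁻¹ * A * Sxx⁻¹).mulVec (x i)) * (1 / ((n:ℝ) - k))
          * (∑ i, ((if i = a then (1:ℝ) else 0) - x i ⬝ᵥ Sxx⁻¹.mulVec (x a))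
            * ((if i = a then (1:ℝ) else 0) - x i ⬝ᵥ Sxx⁻¹.mulVec (x a)))) * (σ a) ^ 2
        = B a * (σ a) ^ 2 - (∑ i, B i) * (1 / ((n:ℝ) - k)) * (σ a) ^ 2
          + (∑ i, B i) * (1 / ((n:ℝ) - k)) * (P a * (σ a) ^ 2) := by
      intro a
      rw [hRaa a, ← hB a, ← hP a]
      rw [show (∑ i, x i ⬝ᵥ (Sxx⁻¹ * A * Sxx⁻¹).mulVec (x i)) = ∑ i, B i from
        (Finset.sum_congr rfl fun i _ => (hB i).symm)]
      ring
    rw [Finset.sum_congr rfl fun a _ => hgoal a, Finset.sum_add_distrib, Finset.sum_sub_distrib,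
      ← Finset.mul_sum, ← Finset.mul_sum]
    have hexB : ∑ i, B i * ((σ i) ^ 2 - sbar) = (∑ i, B i * (σ i) ^ 2) - (∑ i, B i) * sbar := by
      rw [Finset.sum_congr rfl fun i (_ : i ∈ univ) => mul_sub (B i) ((σ i)^2) sbar,
        Finset.sum_sub_distrib, ← Finset.sum_mul]
    have hexP : ∑ i, P i * ((σ i) ^ 2 - sbar) = (∑ i, P i * (σ i) ^ 2) - (k:ℝ) * sbar := by
      rw [Finset.sum_congr rfl fun i (_ : i ∈ univ) => mul_sub (P i) ((σ i)^2) sbar,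
        Finset.sum_sub_distrib, ← Finset.sum_mul]
      congr 1
      rw [show (∑ i, P i) = ∑ i, x i ⬝ᵥ Sxx⁻¹.mulVec (x i) from
        Finset.sum_congr rfl fun i _ => hP i, htrace]
    rw [hexB, hexP, hsbar]
    field_simp
    ring
  refine ⟨main, ?_, ?_⟩
  · -- homoscedastic case
    intro hhom
    have hsig : ∀ i, (σ i) ^ 2 = sbar := by
      intro i
      have hsum : ∑ j, (σ j) ^ 2 = (n : ℝ) * (σ i) ^ 2 := by
        rw [Finset.sum_congr rfl fun j (_ : j ∈ univ) => hhom j i, Finset.sum_const,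
          Finset.card_univ]
        simp
      rw [hsbar, hsum]
      field_simp
    have h0 : ∫ ω, θHO ω ∂μ - β ⬝ᵥ A.mulVec β = 0 := by
      rw [main,
        Finset.sum_congr rfl fun i (_ : i ∈ univ) =>
          (show B i * ((σ i) ^ 2 - sbar) = 0 by rw [hsig i]; ring),
        Finset.sum_congr rfl fun i (_ : i ∈ univ) =>
          (show P i * ((σ i) ^ 2 - sbar) = 0 by rw [hsig i]; ring)]
      simp
    linarith
  · -- balanced design case
    intro hbal
    have i0 : Fin n := ⟨0, Nat.lt_of_le_of_lt (Nat.zero_le k) hkn⟩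
    have hzsum : ∑ i, ((σ i) ^ 2 - sbar) = 0 := by
      rw [Finset.sum_sub_distrib, Finset.sum_const, Finset.card_univ, hsbar]
      simp
      field_simp
      ring
    have hzero : ∀ (f : Fin n → ℝ), (∀ i, f i = f i0) →
        ∑ i, f i * ((σ i) ^ 2 - sbar) = 0 := by
      intro f hf
      rw [Finset.sum_congr rfl fun i (_ : i ∈ univ) => by rw [hf i], ← Finset.mul_sum, hzsum,
        mul_zero]
    have h0 : ∫ ω, θHO ω ∂μ - β ⬝ᵥ A.mulVec β = 0 := by
      rw [main, hzero B (fun i => (hbal i i0).1), hzero P (fun i => (hbal i i0).2)]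
      simp
    linarith
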